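/- An n-ary group (G,f) is derived from a binary group (i.e., there is a group structure ∘ on G such that f(x_1,...,x_n) = x_1 ∘ ... ∘ x_n) if and only if G contains an n-ary identity, i.e., an element e such that f(e,...,e,x,e,...,e) = x for all x and all positions of x. -/

import Mathlib

/-- An `n`-ary (polyadic) group: a set `G` with an `n`-ary operation `f`
(encoded on lists; only values on lists of length `n` are relevant) which is
associative and uniquely solvable in every position. -/
structure PolyadicGroup (n : ℕ) (G : Type*) where
  f : List G → G
  assoc : ∀ u v w u' v' w' : List G,
    v.length = n → v'.length = n →
    u.length + w.length = n - 1 → u'.length + w'.length = n - 1 →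
    u ++ v ++ w = u' ++ v' ++ w' →
    f (u ++ f v :: w) = f (u' ++ f v' :: w')
  solv : ∀ (u w : List G) (b : G), u.length + w.length = n - 1 →
    ∃! z : G, f (u ++ z :: w) = b

/-- An n-ary group is derived from a binary group iff it has an n-ary identity. -/
theorem derived_iff_identity {n : ℕ} {G : Type*} (hn : 2 ≤ n)
    (P : PolyadicGroup n G) :
    (∃ _ : Group G, ∀ l : List G, l.length = n → P.f l = l.prod) ↔
    (∃ e : G, ∀ x : G, ∀ i : ℕ, 1 ≤ i → i ≤ n →
      P.f (List.replicate (i - 1) e ++ x :: List.replicate (n - i) e) = x) := by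
  constructor
  · rintro ⟨grp, hf⟩
    refine ⟨1, fun x i hi1 hin => ?_⟩
    rw [hf]
    · simp [List.prod_append]
    · simp
      omega
  · rintro ⟨e, he⟩
    obtain ⟨m, rfl⟩ : ∃ m, n = m + 2 := ⟨n - 2, by omega⟩
    have hid : ∀ (j : ℕ) (x : G), j ≤ m + 1 →
        P.f (List.replicate j e ++ x :: List.replicate (m + 1 - j) e) = x := by
      intro j x hj
      have h := he x (j + 1) (by omega) (by omega)
      rw [show j + 1 - 1 = j from rfl, show m + 2 - (j + 1) = m + 1 - j from by omega] at h
      exact h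
    letI : Mul G := ⟨fun a b => P.f (a :: List.replicate m e ++ [b])⟩
    letI : One G := ⟨e⟩
    have hinv : ∀ a : G, ∃! z : G, P.f ((a :: List.replicate m e) ++ z :: []) = e := by
      intro a
      exact P.solv _ _ _ (by simp)
    letI : Inv G := ⟨fun a => (hinv a).choose⟩
    have hmul : ∀ a b : G, a * b = P.f (a :: List.replicate m e ++ [b]) := fun _ _ => rfl
    have hone : (1 : G) = e := rfl
    have hassoc : ∀ a b c : G, a * b * c = a * (b * c) := by
      intro a b c
      have h := P.assoc [] (a :: List.replicate m e ++ [b]) (List.replicate m e ++ [c])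
        (a :: List.replicate m e) (b :: List.replicate m e ++ [c]) []
        (by simp) (by simp) (by simp) (by simp) (by simp)
      simpa [hmul] using h
    have hmul_one : ∀ a : G, a * 1 = a := by
      intro a
      have h := hid 0 a (by omega)
      simp only [Nat.sub_zero, List.replicate_succ' , List.nil_append] at h
      simpa [hmul, hone] using h
    have hmul_inv : ∀ a : G, a * a⁻¹ = 1 := by
      intro a
      have h := (hinv a).choose_spec.1
      exact h
    letI grp : Group G := Group.ofRightAxioms hassoc hmul_one hmul_inv
    have key : ∀ l : List G, l.length ≤ m + 2 →
        P.f (List.replicate (m + 2 - l.length) e ++ l) = l.prod := by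
      intro l
      induction l with
      | nil =>
        intro _
        have h := hid 0 e (by omega)
        simp only [List.nil_append, Nat.sub_zero] at h
        simp only [List.length_nil, Nat.sub_zero, List.append_nil, List.prod_nil, hone]
        rw [show List.replicate (m + 2) e = e :: List.replicate (m + 1) e from rfl]
        exact h
      | cons y l ih =>
        intro hlen
        simp only [List.length_cons] at hlen ⊢
        have hk : l.length ≤ m + 1 := by omega
        -- Step B : y * P.f (E (m+2-k) ++ l) = P.f (y :: E (m+1-k) ++ l)
        have hB : y * P.f (List.replicate (m + 2 - l.length) e ++ l)
            = P.f (y :: List.replicate (m + 1 - l.length) e ++ l) := by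
          have h := P.assoc (y :: List.replicate m e)
            (List.replicate (m + 2 - l.length) e ++ l) []
            [] (y :: List.replicate (m + 1) e) (List.replicate (m + 1 - l.length) e ++ l)
            (by simp; omega) (by simp) (by simp) (by simp; omega)
            (by
              simp only [List.cons_append, List.nil_append, List.append_nil,
                List.append_assoc]
              rw [← List.append_assoc, ← List.append_assoc, ← List.replicate_add,
                ← List.replicate_add,
                show m + (m + 2 - l.length) = (m + 1) + (m + 1 - l.length) from by omega])
          have hy : P.f (y :: List.replicate (m + 1) e) = y := by
            have := hid 0 y (by omega)
            simpa using this
          rw [hmul]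
          simp only [List.cons_append, List.nil_append, List.append_nil] at h ⊢
          rw [h, hy]
        match l with
        | [] =>
          have h := hid (m + 1) y (by omega)
          simp only [Nat.sub_self, List.replicate_zero] at h
          simpa [hmul_one] using h
        | z :: l' =>
          -- Step A : P.f (y :: E q ++ z :: l') = P.f (E q ++ y :: z :: l')
          set k := (z :: l').length with hkdef
          have hk1 : 1 ≤ k := by simp [hkdef]
          have hkl : k = l'.length + 1 := rfl
          have hkm : k ≤ m + 1 := hk
          have hA : P.f (y :: List.replicate (m + 1 - k) e ++ z :: l')
              = P.f (List.replicate (m + 1 - k) e ++ y :: z :: l') := by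
            have h := P.assoc []
              (List.replicate (m + 1 - k) e ++ y :: List.replicate k e)
              (List.replicate (m + 1 - k) e ++ z :: l')
              (List.replicate (m + 1 - k) e ++ [y])
              (List.replicate (m + 1) e ++ [z]) l'
              (by simp; omega) (by simp) (by simp; omega) (by simp; omega)
              (by
                simp only [List.nil_append, List.append_assoc, List.cons_append,
                  List.append_cancel_left_eq, List.singleton_append]
                congr 1
                rw [← List.append_assoc, ← List.replicate_add,
                  show k + (m + 1 - k) = m + 1 from by omega])
            have h1 : P.f (List.replicate (m + 1 - k) e ++ y :: List.replicate k e) = y := by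
              have := hid (m + 1 - k) y (by omega)
              rwa [show m + 1 - (m + 1 - k) = k from by omega] at this
            have h2 : P.f (List.replicate (m + 1) e ++ [z]) = z := by
              have := hid (m + 1) z (by omega)
              simpa using this
            rw [h1, h2] at h
            simpa using h
          have hq : m + 2 - (k + 1) = m + 1 - k := by omega
          rw [hq, ← hA, ← hB]
          rw [ih (by omega)]
          simp
    refine ⟨grp, fun l hl => ?_⟩
    have h := key l (by omega)
    rwa [hl, Nat.sub_self, List.replicate_zero, List.nil_append] at h
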